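/- Let V be a real vector space with finrank V = 3, Q a quadratic form on V, and A, B, C elements of the Clifford algebra Cl(Q). Set B̄ := involute (reverse B) and D := A² − A·(B + B̄) + B·B̄. If D·(involute D)·(reverse D)·(involute (reverse D)) = algebraMap q for some real number q ≠ 0, then X := q⁻¹ • ((involute D)·(reverse D)·(involute (reverse D))·(A·C − C·B̄)) is the unique element of Cl(Q) satisfying A·X − X·B = C. -/

import Mathlib

open CliffordAlgebra

set_option linter.unusedSectionVars false
set_option maxHeartbeats 1000000

section Abstract

variable {AA : Type*} [Ring AA] [Algebra ℝ AA]

lemma alg_left_comm (r : ℝ) (x y : AA) :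
    x * (algebraMap ℝ AA r * y) = algebraMap ℝ AA r * (x * y) := by
  rw [← mul_assoc, ← Algebra.commutes, mul_assoc]

section Rels
variable (a b c : AA) {qa qb qc : ℝ}
variable (ha : a * a = algebraMap ℝ AA qa) (hb : b * b = algebraMap ℝ AA qb)
  (hc : c * c = algebraMap ℝ AA qc)
  (hab : a * b = -(b * a)) (hac : a * c = -(c * a)) (hbc : b * c = -(c * b))

include hab in
lemma rel_ba : b * a = -(a * b) := by rw [hab, neg_neg]

include hac in
lemma rel_ca : c * a = -(a * c) := by rw [hac, neg_neg]

include hbc in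
lemma rel_cb : c * b = -(b * c) := by rw [hbc, neg_neg]

include hb hab in
lemma rel_bab : b * (a * b) = -(algebraMap ℝ AA qb * a) := by
  rw [← mul_assoc, rel_ba a b hab, neg_mul, mul_assoc, hb, ← Algebra.commutes]

include hab in
lemma rel_bac : b * (a * c) = -(a * (b * c)) := by
  rw [← mul_assoc, rel_ba a b hab, neg_mul, mul_assoc]

include hb in
lemma rel_bbc : b * (b * c) = algebraMap ℝ AA qb * c := by
  rw [← mul_assoc, hb]

include hb hab in
lemma rel_babc : b * (a * (b * c)) = -(algebraMap ℝ AA qb * (a * c)) := by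
  rw [← mul_assoc, rel_ba a b hab, neg_mul, mul_assoc, rel_bbc b c hb, alg_left_comm]

include hac hbc in
lemma rel_cab : c * (a * b) = a * (b * c) := by
  rw [← mul_assoc, rel_ca a c hac, neg_mul, mul_assoc, rel_cb b c hbc, mul_neg, neg_neg]

include hc hac in
lemma rel_cac : c * (a * c) = -(algebraMap ℝ AA qc * a) := by
  rw [← mul_assoc, rel_ca a c hac, neg_mul, mul_assoc, hc, ← Algebra.commutes]

include hc hbc in
lemma rel_cbc : c * (b * c) = -(algebraMap ℝ AA qc * b) := by
  rw [← mul_assoc, rel_cb b c hbc, neg_mul, mul_assoc, hc, ← Algebra.commutes]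

include hc hac hbc in
lemma rel_cabc : c * (a * (b * c)) = algebraMap ℝ AA qc * (a * b) := by
  rw [← mul_assoc, rel_ca a c hac, neg_mul, mul_assoc, rel_cbc b c hc hbc, mul_neg, neg_neg,
    alg_left_comm]

include hab hac in
lemma comm_abc_a : a * (b * c) * a = a * (a * (b * c)) := by
  have h1 : (b * c) * a = a * (b * c) := by
    rw [mul_assoc, rel_ca a c hac, mul_neg, rel_bac a b c hab, neg_neg]
  rw [mul_assoc, h1]

include hb hab hbc in
lemma comm_abc_b : a * (b * c) * b = b * (a * (b * c)) := by
  rw [mul_assoc, mul_assoc, rel_cb b c hbc, mul_neg, mul_neg, rel_bbc b c hb, alg_left_comm,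
    rel_babc a b c hb hab]

include hc hac hbc in
lemma comm_abc_c : a * (b * c) * c = c * (a * (b * c)) := by
  rw [mul_assoc, mul_assoc, hc, ← Algebra.commutes qc b, alg_left_comm,
    rel_cabc a b c hc hac hbc]

end Rels

end Abstract

section CliffordDim3

variable {V : Type*} [AddCommGroup V] [Module ℝ V] {Q : QuadraticForm ℝ V}

lemma cj_cj (x : CliffordAlgebra Q) :
    involute (reverse (involute (reverse x))) = x := by
  rw [← reverse_involute, involute_involute, reverse_reverse]

lemma cj_mul (x y : CliffordAlgebra Q) :
    involute (reverse (x * y)) = involute (reverse y) * involute (reverse x) := by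
  rw [reverse.map_mul, map_mul]

/-- In a 3-dimensional Clifford algebra, conjugation-fixed elements are central. -/
lemma central_of_conj_fixed (hV : Module.finrank ℝ V = 3) (y : CliffordAlgebra Q)
    (hy : involute (reverse y) = y) : ∀ w : CliffordAlgebra Q, y * w = w * y := by
  have : FiniteDimensional ℝ V := Module.finite_of_finrank_eq_succ hV
  obtain ⟨v, hortho⟩ : ∃ v : Module.Basis (Fin 3) ℝ V,
      ∀ i j : Fin 3, i ≠ j → Q.IsOrtho (v i) (v j) := by
    obtain ⟨v0, hv0⟩ :=
      LinearMap.BilinForm.exists_orthogonal_basis (QuadraticForm.associated_isSymm ℝ Q)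
    refine ⟨v0.reindex (finCongr hV), fun i j hij => ?_⟩
    rw [v0.reindex_apply, v0.reindex_apply]
    refine QuadraticMap.associated_isOrtho.mp ?_
    exact hv0 fun h => hij ((finCongr hV).symm.injective h)
  set e : Fin 3 → CliffordAlgebra Q := fun i => ι Q (v i) with he
  have hsq : ∀ i, e i * e i = algebraMap ℝ _ (Q (v i)) := fun i => ι_sq_scalar Q (v i)
  have hswap : ∀ i j, i ≠ j → e i * e j = -(e j * e i) := fun i j hij =>
    ι_mul_ι_comm_of_isOrtho (hortho i j hij)
  have hab : e 0 * e 1 = -(e 1 * e 0) := hswap 0 1 (by decide)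
  have hac : e 0 * e 2 = -(e 2 * e 0) := hswap 0 2 (by decide)
  have hbc : e 1 * e 2 = -(e 2 * e 1) := hswap 1 2 (by decide)
  have ha := hsq 0
  have hb := hsq 1
  have hc := hsq 2
  set W : Submodule ℝ (CliffordAlgebra Q) := Submodule.span ℝ
    {1, e 0, e 1, e 2, e 0 * e 1, e 0 * e 2, e 1 * e 2, e 0 * (e 1 * e 2)} with hW
  have hmem : ∀ x ∈ ({1, e 0, e 1, e 2, e 0 * e 1, e 0 * e 2, e 1 * e 2,
      e 0 * (e 1 * e 2)} : Set (CliffordAlgebra Q)), x ∈ W := fun x hx => Submodule.subset_span hx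
  have m1 : (1 : CliffordAlgebra Q) ∈ W := hmem _ (Set.mem_insert _ _)
  have me0 : e 0 ∈ W := hmem _ (Set.mem_insert_of_mem _ (Set.mem_insert _ _))
  have me1 : e 1 ∈ W := hmem _ (Set.mem_insert_of_mem _ (Set.mem_insert_of_mem _
    (Set.mem_insert _ _)))
  have me2 : e 2 ∈ W := hmem _ (Set.mem_insert_of_mem _ (Set.mem_insert_of_mem _
    (Set.mem_insert_of_mem _ (Set.mem_insert _ _))))
  have me01 : e 0 * e 1 ∈ W := hmem _ (Set.mem_insert_of_mem _ (Set.mem_insert_of_mem _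
    (Set.mem_insert_of_mem _ (Set.mem_insert_of_mem _ (Set.mem_insert _ _)))))
  have me02 : e 0 * e 2 ∈ W := hmem _ (Set.mem_insert_of_mem _ (Set.mem_insert_of_mem _
    (Set.mem_insert_of_mem _ (Set.mem_insert_of_mem _ (Set.mem_insert_of_mem _
    (Set.mem_insert _ _))))))
  have me12 : e 1 * e 2 ∈ W := hmem _ (Set.mem_insert_of_mem _ (Set.mem_insert_of_mem _
    (Set.mem_insert_of_mem _ (Set.mem_insert_of_mem _ (Set.mem_insert_of_mem _
    (Set.mem_insert_of_mem _ (Set.mem_insert _ _)))))))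
  have me012 : e 0 * (e 1 * e 2) ∈ W := hmem _ (Set.mem_insert_of_mem _
    (Set.mem_insert_of_mem _ (Set.mem_insert_of_mem _ (Set.mem_insert_of_mem _
    (Set.mem_insert_of_mem _ (Set.mem_insert_of_mem _ (Set.mem_insert_of_mem _ rfl)))))))
  have halg : ∀ (r : ℝ) x, x ∈ W → algebraMap ℝ (CliffordAlgebra Q) r * x ∈ W := by
    intro r x hx
    rw [← Algebra.smul_def]
    exact W.smul_mem r hx
  -- closure of W under left multiplication by the generators
  have hW0 : ∀ w ∈ W, e 0 * w ∈ W := by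
    intro w hw
    induction hw using Submodule.span_induction with
    | mem x hx =>
      simp only [Set.mem_insert_iff, Set.mem_singleton_iff] at hx
      rcases hx with rfl | rfl | rfl | rfl | rfl | rfl | rfl | rfl
      · simpa using me0
      · rw [ha, Algebra.algebraMap_eq_smul_one]; exact W.smul_mem _ m1
      · exact me01
      · exact me02
      · rw [← mul_assoc, ha]; exact halg _ _ me1
      · rw [← mul_assoc, ha]; exact halg _ _ me2
      · exact me012
      · rw [← mul_assoc, ha]; exact halg _ _ me12
    | zero => simpa using W.zero_mem
    | add x z hx hz ihx ihz => rw [mul_add]; exact W.add_mem ihx ihz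
    | smul r x hx ihx => rw [mul_smul_comm]; exact W.smul_mem r ihx
  have hW1 : ∀ w ∈ W, e 1 * w ∈ W := by
    intro w hw
    induction hw using Submodule.span_induction with
    | mem x hx =>
      simp only [Set.mem_insert_iff, Set.mem_singleton_iff] at hx
      rcases hx with rfl | rfl | rfl | rfl | rfl | rfl | rfl | rfl
      · simpa using me1
      · rw [rel_ba _ _ hab]; exact W.neg_mem me01
      · rw [hb, Algebra.algebraMap_eq_smul_one]; exact W.smul_mem _ m1
      · exact me12
      · rw [rel_bab _ _ hb hab]; exact W.neg_mem (halg _ _ me0)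
      · rw [rel_bac _ _ _ hab]; exact W.neg_mem me012
      · rw [rel_bbc _ _ hb]; exact halg _ _ me2
      · rw [rel_babc _ _ _ hb hab]; exact W.neg_mem (halg _ _ me02)
    | zero => simpa using W.zero_mem
    | add x z hx hz ihx ihz => rw [mul_add]; exact W.add_mem ihx ihz
    | smul r x hx ihx => rw [mul_smul_comm]; exact W.smul_mem r ihx
  have hW2 : ∀ w ∈ W, e 2 * w ∈ W := by
    intro w hw
    induction hw using Submodule.span_induction with
    | mem x hx =>
      simp only [Set.mem_insert_iff, Set.mem_singleton_iff] at hx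
      rcases hx with rfl | rfl | rfl | rfl | rfl | rfl | rfl | rfl
      · simpa using me2
      · rw [rel_ca _ _ hac]; exact W.neg_mem me02
      · rw [rel_cb _ _ hbc]; exact W.neg_mem me12
      · rw [hc, Algebra.algebraMap_eq_smul_one]; exact W.smul_mem _ m1
      · rw [rel_cab _ _ _ hac hbc]; exact me012
      · rw [rel_cac _ _ hc hac]; exact W.neg_mem (halg _ _ me0)
      · rw [rel_cbc _ _ hc hbc]; exact W.neg_mem (halg _ _ me1)
      · rw [rel_cabc _ _ _ hc hac hbc]; exact halg _ _ me01
    | zero => simpa using W.zero_mem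
    | add x z hx hz ihx ihz => rw [mul_add]; exact W.add_mem ihx ihz
    | smul r x hx ihx => rw [mul_smul_comm]; exact W.smul_mem r ihx
  have hWe : ∀ i : Fin 3, ∀ w ∈ W, e i * w ∈ W := by
    intro i
    fin_cases i
    · exact hW0
    · exact hW1
    · exact hW2
  -- closure under left multiplication by ι of any vector
  have hWι : ∀ u : V, ∀ w ∈ W, ι Q u * w ∈ W := by
    intro u w hw
    have hu : u ∈ Submodule.span ℝ (Set.range v) := by rw [v.span_eq]; trivial
    induction hu using Submodule.span_induction with
    | mem x hx => obtain ⟨i, rfl⟩ := hx; exact hWe i w hw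
    | zero => simpa using W.zero_mem
    | add x z hx hz ihx ihz => rw [map_add, add_mul]; exact W.add_mem ihx ihz
    | smul r x hx ihx => rw [map_smul, smul_mul_assoc]; exact W.smul_mem r ihx
  -- every element is in W
  have hspan : ∀ z : CliffordAlgebra Q, z ∈ W := by
    have key : ∀ z : CliffordAlgebra Q, ∀ w ∈ W, z * w ∈ W := by
      intro z
      induction z using CliffordAlgebra.induction with
      | algebraMap r => exact fun w hw => halg r w hw
      | ι u => exact hWι u
      | mul x z ihx ihz => intro w hw; rw [mul_assoc]; exact ihx _ (ihz w hw)
      | add x z ihx ihz => intro w hw; rw [add_mul]; exact W.add_mem (ihx w hw) (ihz w hw)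
    intro z
    simpa using key z 1 m1
  -- conjugates of the generators
  have hconj_e : ∀ i, involute (reverse (e i)) = -(e i) := by
    intro i; simp [he]
  have hconj2 : ∀ i j, involute (reverse (e i * e j)) = e j * e i := by
    intro i j; rw [cj_mul, hconj_e, hconj_e, neg_mul_neg]
  have hconj3 : involute (reverse (e 0 * (e 1 * e 2))) = e 0 * (e 1 * e 2) := by
    rw [cj_mul, hconj2, hconj_e, mul_neg, rel_cb _ _ hbc, neg_mul, neg_neg, mul_assoc,
      rel_ca _ _ hac, mul_neg, rel_bac _ _ _ hab, neg_neg]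
  -- the generators commute with z + conj z
  have hgen : ∀ i : Fin 3, ∀ z : CliffordAlgebra Q,
      e i * (z + involute (reverse z)) = (z + involute (reverse z)) * e i := by
    intro i z
    have hz := hspan z
    induction hz using Submodule.span_induction with
    | mem x hx =>
      simp only [Set.mem_insert_iff, Set.mem_singleton_iff] at hx
      rcases hx with rfl | rfl | rfl | rfl | rfl | rfl | rfl | rfl
      · simp [mul_add, add_mul]
      · rw [hconj_e]; simp
      · rw [hconj_e]; simp
      · rw [hconj_e]; simp
      · rw [hconj2, rel_ba _ _ hab]; simp
      · rw [hconj2, rel_ca _ _ hac]; simp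
      · rw [hconj2, rel_cb _ _ hbc]; simp
      · rw [hconj3, ← two_smul ℝ, mul_smul_comm, smul_mul_assoc]
        congr 1
        fin_cases i
        · exact (comm_abc_a _ _ _ hab hac).symm
        · exact (comm_abc_b _ _ _ hb hab hbc).symm
        · exact (comm_abc_c _ _ _ hc hac hbc).symm
    | zero => simp
    | add x z hx hz ihx ihz =>
      have hre : x + z + involute (reverse (x + z))
          = (x + involute (reverse x)) + (z + involute (reverse z)) := by
        rw [map_add, map_add]; abel
      rw [hre, mul_add, add_mul, ihx, ihz]
    | smul r x hx ihx =>
      rw [map_smul, map_smul, ← smul_add, mul_smul_comm, smul_mul_assoc, ihx]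
  -- conclude for ι of any vector
  have hι : ∀ u : V, ι Q u * y = y * ι Q u := by
    intro u
    have key : ∀ u ∈ Submodule.span ℝ (Set.range v),
        ι Q u * (y + involute (reverse y)) = (y + involute (reverse y)) * ι Q u := by
      intro u hu
      induction hu using Submodule.span_induction with
      | mem x hx => obtain ⟨i, rfl⟩ := hx; exact hgen i y
      | zero => simp
      | add x z hx hz ihx ihz => rw [map_add, add_mul, ihx, ihz, ← mul_add]
      | smul r x hx ihx => rw [map_smul, smul_mul_assoc, mul_smul_comm, ihx]
    have h2 := key u (by rw [v.span_eq]; trivial)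
    rw [hy, ← two_smul ℝ, mul_smul_comm, smul_mul_assoc] at h2
    exact smul_right_injective _ (by norm_num : (2 : ℝ) ≠ 0) h2
  intro w
  induction w using CliffordAlgebra.induction with
  | algebraMap r => rw [← Algebra.commutes]
  | ι u => exact (hι u).symm
  | mul x z ihx ihz => rw [← mul_assoc, ihx, mul_assoc, ihz, mul_assoc]
  | add x z ihx ihz => rw [mul_add, add_mul, ihx, ihz]

end CliffordDim3

theorem stmt_17 (V : Type*) [AddCommGroup V] [Module ℝ V]
    (hV : Module.finrank ℝ V = 3) (Q : QuadraticForm ℝ V)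
    (A B C : CliffordAlgebra Q) (D : CliffordAlgebra Q)
    (hD : D = A ^ 2 - A * (B + involute (reverse B)) + B * involute (reverse B))
    (q : ℝ) (hq : q ≠ 0)
    (hdet : D * involute D * reverse D * involute (reverse D) =
      algebraMap ℝ (CliffordAlgebra Q) q) :
    A * (q⁻¹ • (involute D * reverse D * involute (reverse D) *
          (A * C - C * involute (reverse B)))) -
        (q⁻¹ • (involute D * reverse D * involute (reverse D) *
          (A * C - C * involute (reverse B)))) * B = C ∧
      ∀ X : CliffordAlgebra Q, A * X - X * B = C →
        X = q⁻¹ • (involute D * reverse D * involute (reverse D) *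
          (A * C - C * involute (reverse B))) := by
  have hfix_add : ∀ x : CliffordAlgebra Q,
      involute (reverse (x + involute (reverse x))) = x + involute (reverse x) := by
    intro x
    rw [map_add, map_add, cj_cj, add_comm]
  have hfix_mul : ∀ x : CliffordAlgebra Q,
      involute (reverse (x * involute (reverse x))) = x * involute (reverse x) := by
    intro x
    rw [cj_mul, cj_cj]
  have hcent_add : ∀ x w : CliffordAlgebra Q,
      (x + involute (reverse x)) * w = w * (x + involute (reverse x)) :=
    fun x w => central_of_conj_fixed hV _ (hfix_add x) w
  have hcent_mul : ∀ x w : CliffordAlgebra Q,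
      (x * involute (reverse x)) * w = w * (x * involute (reverse x)) :=
    fun x w => central_of_conj_fixed hV _ (hfix_mul x) w
  have hself : ∀ x : CliffordAlgebra Q,
      x * involute (reverse x) = involute (reverse x) * x := by
    intro x
    have h1 : (x + involute (reverse x)) * x = x * (x + involute (reverse x)) :=
      hcent_add x x
    rw [mul_add, add_mul] at h1
    exact (add_left_cancel h1).symm
  -- `involute D * reverse D` is central
  have hP : ∀ w, (involute D * reverse D) * w = w * (involute D * reverse D) := by
    have h1 : involute (D * involute (reverse D)) = involute D * reverse D := by
      rw [map_mul, involute_involute]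
    intro w
    have h2 := congrArg involute (hcent_mul D (involute w))
    rwa [map_mul, involute_involute, h1, map_mul, involute_involute, h1] at h2
  -- the adjugate times D is the determinant
  have hadjD : (involute D * reverse D * involute (reverse D)) * D
      = algebraMap ℝ (CliffordAlgebra Q) q := by
    rw [mul_assoc (involute D * reverse D) (involute (reverse D)) D, ← hself D,
      ← mul_assoc, hP D, ← mul_assoc]
    exact hdet
  -- conjugate of D
  have hcjD : involute (reverse D) =
      involute (reverse A) * involute (reverse A)
        - (B + involute (reverse B)) * involute (reverse A)
        + B * involute (reverse B) := by
    rw [hD, map_add, map_add, map_sub, map_sub, hfix_mul B, pow_two, cj_mul, cj_mul,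
      hfix_add B]
  -- A commutes with the conjugate of D
  have hAcjD : A * involute (reverse D) = involute (reverse D) * A := by
    have h1 : A * (involute (reverse A) * involute (reverse A))
        = (involute (reverse A) * involute (reverse A)) * A := by
      rw [← mul_assoc, hself A, mul_assoc, hself A, ← mul_assoc]
    have h2 : A * ((B + involute (reverse B)) * involute (reverse A))
        = ((B + involute (reverse B)) * involute (reverse A)) * A := by
      rw [← mul_assoc, ← hcent_add B A, mul_assoc, hself A, ← mul_assoc]
    have h3 : A * (B * involute (reverse B)) = (B * involute (reverse B)) * A :=
      (hcent_mul B A).symm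
    rw [hcjD, mul_add, mul_sub, h1, h2, h3, ← sub_mul, ← add_mul]
  -- A commutes with the adjugate
  have hadj_comm : A * (involute D * reverse D * involute (reverse D))
      = (involute D * reverse D * involute (reverse D)) * A := by
    rw [← mul_assoc, ← hP A, mul_assoc, hAcjD, ← mul_assoc]
  -- key computation for existence
  have e1 : A ^ 2 * C = A * (A * C) := by rw [pow_two, mul_assoc]
  have key3 : A * (A * C - C * involute (reverse B))
      - (A * C - C * involute (reverse B)) * B = D * C := by
    have e2 : (A * (B + involute (reverse B))) * C
        = (A * C) * B + A * (C * involute (reverse B)) := by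
      rw [mul_assoc, hcent_add B C, mul_add C B (involute (reverse B)), mul_add,
        ← mul_assoc A C B]
    have t2 : (C * involute (reverse B)) * B = (B * involute (reverse B)) * C := by
      rw [mul_assoc, ← hself B, ← hcent_mul B C]
    rw [hD, add_mul (A ^ 2 - A * (B + involute (reverse B))) (B * involute (reverse B)) C,
      sub_mul (A ^ 2) (A * (B + involute (reverse B))) C, e1, e2,
      mul_sub A (A * C) (C * involute (reverse B)),
      sub_mul (A * C) (C * involute (reverse B)) B, t2]
    abel
  refine ⟨?_, ?_⟩
  · rw [mul_smul_comm, smul_mul_assoc, ← smul_sub]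
    have h4 : A * (involute D * reverse D * involute (reverse D) *
          (A * C - C * involute (reverse B)))
        - (involute D * reverse D * involute (reverse D) *
          (A * C - C * involute (reverse B))) * B
        = (involute D * reverse D * involute (reverse D)) *
            (A * (A * C - C * involute (reverse B))
              - (A * C - C * involute (reverse B)) * B) := by
      rw [← mul_assoc A (involute D * reverse D * involute (reverse D))
          (A * C - C * involute (reverse B)),
        hadj_comm,
        mul_assoc (involute D * reverse D * involute (reverse D)) A
          (A * C - C * involute (reverse B)),
        mul_sub (involute D * reverse D * involute (reverse D))
          (A * (A * C - C * involute (reverse B)))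
          ((A * C - C * involute (reverse B)) * B),
        mul_assoc (involute D * reverse D * involute (reverse D))
          (A * C - C * involute (reverse B)) B]
    rw [h4, key3, ← mul_assoc, hadjD, ← Algebra.smul_def, smul_smul,
      inv_mul_cancel₀ hq, one_smul]
  · intro X hX
    have hDX : D * X = A * C - C * involute (reverse B) := by
      have e1' : A ^ 2 * X = A * (A * X) := by rw [pow_two, mul_assoc]
      have e2' : (A * (B + involute (reverse B))) * X
          = (A * X) * B + A * (X * involute (reverse B)) := by
        rw [mul_assoc, hcent_add B X, mul_add X B (involute (reverse B)), mul_add,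
          ← mul_assoc A X B]
      have t2' : (X * B) * involute (reverse B) = (B * involute (reverse B)) * X := by
        rw [mul_assoc, ← hcent_mul B X]
      rw [← hX, hD, add_mul (A ^ 2 - A * (B + involute (reverse B))) (B * involute (reverse B)) X,
        sub_mul (A ^ 2) (A * (B + involute (reverse B))) X, e1', e2',
        mul_sub A (A * X) (X * B),
        sub_mul (A * X) (X * B) (involute (reverse B)), t2',
        ← mul_assoc A X B, ← mul_assoc A X (involute (reverse B))]
      abel
    have h5 : (involute D * reverse D * involute (reverse D)) * (D * X) = q • X := by
      rw [← mul_assoc, hadjD, ← Algebra.smul_def]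
    rw [hDX] at h5
    calc X = q⁻¹ • (q • X) := by rw [smul_smul, inv_mul_cancel₀ hq, one_smul]
      _ = q⁻¹ • (involute D * reverse D * involute (reverse D) *
          (A * C - C * involute (reverse B))) := by rw [← h5]
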